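/- (Otto's theorem.) Every FO-formula φ(x) of quantifier rank q over the signature consisting of one binary predicate R and unary predicates that is invariant under bisimulations (with respect to the set σ of propositional variables whose unary predicates occur in φ) is logically equivalent to the standard translation of an ML-formula of modal depth at most 2^q − 1. -/

import Mathlib

open FirstOrder

/-! ### Modal logic -/

/-- Formulas of propositional modal logic ML. -/
inductive ML : Type
  | top : ML
  | var : ℕ → ML
  | and : ML → ML → ML
  | not : ML → ML
  | dia : ML → ML

/-- A Kripke model. -/
structure Kripke : Type 1 where
  W : Type
  nonempty : Nonempty W
  R : W → W → Prop
  V : ℕ → Set W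

/-- Truth of an ML-formula at a world of a Kripke model. -/
def ML.sat (M : Kripke) : M.W → ML → Prop
  | _, .top => True
  | w, .var p => w ∈ M.V p
  | w, .and φ ψ => ML.sat M w φ ∧ ML.sat M w ψ
  | w, .not φ => ¬ ML.sat M w φ
  | w, .dia φ => ∃ v, M.R w v ∧ ML.sat M v φ

/-- `β` is a `σ`-bisimulation between the Kripke models `M₁` and `M₂`. -/
def IsBisimulation (σ : Set ℕ) (M₁ M₂ : Kripke) (β : M₁.W → M₂.W → Prop) : Prop :=
  ∀ u₁ u₂, β u₁ u₂ →
    (∀ p ∈ σ, (u₁ ∈ M₁.V p ↔ u₂ ∈ M₂.V p)) ∧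
    (∀ v₁, M₁.R u₁ v₁ → ∃ v₂, M₂.R u₂ v₂ ∧ β v₁ v₂) ∧
    (∀ v₂, M₂.R u₂ v₂ → ∃ v₁, M₁.R u₁ v₁ ∧ β v₁ v₂)

/-- `σ`-bisimilarity of pointed Kripke models. -/
def Bisimilar (σ : Set ℕ) (M₁ M₂ : Kripke) (w₁ : M₁.W) (w₂ : M₂.W) : Prop :=
  ∃ β : M₁.W → M₂.W → Prop, IsBisimulation σ M₁ M₂ β ∧ β w₁ w₂

/-! ### The first-order signature of one binary predicate `R` and unary predicates -/

/-- Relation symbols: for each propositional variable `p : ℕ` a unary predicate,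
and one binary predicate `R`. -/
def ModalRel : ℕ → Type
  | 0 => Empty
  | 1 => ℕ
  | 2 => Unit
  | _ + 3 => Empty

/-- The first-order language with one binary predicate and unary predicates `p : ℕ`. -/
def modalLang : FirstOrder.Language := ⟨fun _ => Empty, ModalRel⟩

/-- A Kripke model regarded as a `modalLang`-structure. -/
instance Kripke.toStructure (M : Kripke) : modalLang.Structure M.W where
  funMap := fun f _ => Empty.elim f
  RelMap := fun {n} r =>
    match n, r with
    | 1, p => fun v => v 0 ∈ M.V p
    | 2, _ => fun v => M.R (v 0) (v 1)

/-- Auxiliary standard translation: the free variable is the last bound variable. -/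
def ML.stAux : ML → (k : ℕ) → modalLang.BoundedFormula Empty (k + 1)
  | .top, k =>
      Language.BoundedFormula.equal
        (Language.Term.var (Sum.inr (Fin.last k))) (Language.Term.var (Sum.inr (Fin.last k)))
  | .var p, k =>
      Language.BoundedFormula.rel (l := 1) (show modalLang.Relations 1 from p)
        ![Language.Term.var (Sum.inr (Fin.last k))]
  | .and φ ψ, k => (ML.stAux φ k) ⊓ (ML.stAux ψ k)
  | .not φ, k => (ML.stAux φ k).not
  | .dia φ, k =>
      Language.BoundedFormula.ex
        ((Language.BoundedFormula.rel (l := 2) (show modalLang.Relations 2 from ())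
            ![Language.Term.var (Sum.inr (Fin.last k).castSucc),
              Language.Term.var (Sum.inr (Fin.last (k + 1)))]) ⊓
          (ML.stAux φ (k + 1)))

/-- The standard translation of an ML-formula: a first-order formula in one free variable. -/
def ML.st (φ : ML) : modalLang.Formula (Fin 1) :=
  (φ.stAux 0).toFormula.relabel (Sum.elim Empty.elim id)

/-- The propositional variables corresponding to a relation symbol. -/
def relVars : ∀ {l : ℕ}, ModalRel l → Set ℕ
  | 1, p => {p}
  | 0, r => Empty.elim r
  | 2, _ => ∅
  | _ + 3, r => Empty.elim r

/-- The set of propositional variables whose unary predicates occur in a formula. -/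
def unarySyms {α : Type} : ∀ {n : ℕ}, modalLang.BoundedFormula α n → Set ℕ
  | _, .falsum => ∅
  | _, .equal _ _ => ∅
  | _, .rel r _ => relVars r
  | _, .imp f g => unarySyms f ∪ unarySyms g
  | _, .all f => unarySyms f

/-- The quantifier rank of a first-order formula. -/
def qr {α : Type} : ∀ {n : ℕ}, modalLang.BoundedFormula α n → ℕ
  | _, .falsum => 0
  | _, .equal _ _ => 0
  | _, .rel _ _ => 0
  | _, .imp f g => max (qr f) (qr g)
  | _, .all f => qr f + 1

/-- The modal depth of an ML-formula. -/
def ML.depth : ML → ℕ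
  | .top => 0
  | .var _ => 0
  | .and φ ψ => max φ.depth ψ.depth
  | .not φ => φ.depth
  | .dia φ => φ.depth + 1

-- Section EF: back-and-forth systems preserve formulas of bounded quantifier rank
open FirstOrder Language

/-- Atomic agreement between two tuples. -/
def BF0 (A B : Kripke) {k : ℕ} (as : Fin k → A.W) (bs : Fin k → B.W) : Prop :=
  (∀ i p, as i ∈ A.V p ↔ bs i ∈ B.V p) ∧
  (∀ i j, A.R (as i) (as j) ↔ B.R (bs i) (bs j)) ∧
  (∀ i j, as i = as j ↔ bs i = bs j)

/-- `m`-round back-and-forth equivalence of tuples. -/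
def BF (A B : Kripke) : ℕ → {k : ℕ} → (Fin k → A.W) → (Fin k → B.W) → Prop
  | 0, _, as, bs => BF0 A B as bs
  | m + 1, _, as, bs => BF0 A B as bs ∧
      (∀ a, ∃ b, BF A B m (Fin.snoc as a) (Fin.snoc bs b)) ∧
      (∀ b, ∃ a, BF A B m (Fin.snoc as a) (Fin.snoc bs b))

theorem BF.bf0 {A B : Kripke} {m k : ℕ} {as : Fin k → A.W} {bs : Fin k → B.W}
    (h : BF A B m as bs) : BF0 A B as bs := by
  cases m with
  | zero => exact h
  | succ m => exact h.1

/-- In `modalLang` every term is a variable. -/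
theorem term_eq_var {α : Type*} (t : modalLang.Term α) : ∃ s, t = Language.Term.var s := by
  cases t with
  | var s => exact ⟨s, rfl⟩
  | func f ts => exact f.elim

theorem elim_cons {W : Type} {k : ℕ} (a0 : W) (as : Fin k → W) (s : Fin 1 ⊕ Fin k) :
    Sum.elim (fun _ => a0) as s =
      Fin.cons (α := fun _ => W) a0 as (Sum.elim (fun _ => (0 : Fin (k+1))) Fin.succ s) := by
  cases s <;> simp

theorem relmap1 (C : Kripke) (p : ℕ) (v : Fin 1 → C.W) :
    Structure.RelMap (L := modalLang) (M := C.W) (show modalLang.Relations 1 from p) v ↔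
      v 0 ∈ C.V p := Iff.rfl

theorem relmap2 (C : Kripke) (r : Unit) (v : Fin 2 → C.W) :
    Structure.RelMap (L := modalLang) (M := C.W) (show modalLang.Relations 2 from r) v ↔
      C.R (v 0) (v 1) := Iff.rfl

/-- The Ehrenfeucht–Fraïssé lemma: tuples equivalent in the `m`-round back-and-forth
game satisfy the same formulas of quantifier rank at most `m`. -/
theorem EF {A B : Kripke} : ∀ {k : ℕ} (ψ : modalLang.BoundedFormula (Fin 1) k) (m : ℕ),
    qr ψ ≤ m → ∀ (as : Fin k → A.W) (bs : Fin k → B.W) (a0 : A.W) (b0 : B.W),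
    BF A B m (Fin.cons a0 as) (Fin.cons b0 bs) →
    (ψ.Realize (fun _ => a0) as ↔ ψ.Realize (fun _ => b0) bs) := by
  intro k ψ
  induction ψ with
  | falsum => intro m _ as bs a0 b0 _; exact Iff.rfl
  | equal t₁ t₂ =>
    intro m _ as bs a0 b0 hbf
    obtain ⟨s₁, rfl⟩ := term_eq_var t₁
    obtain ⟨s₂, rfl⟩ := term_eq_var t₂
    have h0 := hbf.bf0
    show Sum.elim (fun _ => a0) as s₁ = Sum.elim (fun _ => a0) as s₂ ↔
      Sum.elim (fun _ => b0) bs s₁ = Sum.elim (fun _ => b0) bs s₂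
    rw [elim_cons a0 as s₁, elim_cons a0 as s₂, elim_cons b0 bs s₁, elim_cons b0 bs s₂]
    exact h0.2.2 _ _
  | rel r ts =>
    intro m _ as bs a0 b0 hbf
    have h0 := hbf.bf0
    rename_i l _
    match l, r with
    | 1, p =>
      obtain ⟨s, hs⟩ := term_eq_var (ts 0)
      have hts : ts = ![Language.Term.var s] := by
        funext i; fin_cases i; simpa using hs
      rw [hts]
      show Sum.elim (fun _ => a0) as s ∈ A.V p ↔ Sum.elim (fun _ => b0) bs s ∈ B.V p
      rw [elim_cons a0 as s, elim_cons b0 bs s]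
      exact h0.1 _ p
    | 2, r =>
      obtain ⟨s₀, hs₀⟩ := term_eq_var (ts 0)
      obtain ⟨s₁, hs₁⟩ := term_eq_var (ts 1)
      have hts : ts = ![Language.Term.var s₀, Language.Term.var s₁] := by
        funext i
        fin_cases i
        · simpa using hs₀
        · simpa using hs₁
      rw [hts]
      show A.R (Sum.elim (fun _ => a0) as s₀) (Sum.elim (fun _ => a0) as s₁) ↔
        B.R (Sum.elim (fun _ => b0) bs s₀) (Sum.elim (fun _ => b0) bs s₁)
      rw [elim_cons a0 as s₀, elim_cons a0 as s₁, elim_cons b0 bs s₀, elim_cons b0 bs s₁]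
      exact h0.2.1 _ _
  | imp f g ihf ihg =>
    intro m hm as bs a0 b0 hbf
    have hf : qr f ≤ m := le_trans (le_max_left _ _) hm
    have hg : qr g ≤ m := le_trans (le_max_right _ _) hm
    simp only [BoundedFormula.realize_imp]
    rw [ihf m hf as bs a0 b0 hbf, ihg m hg as bs a0 b0 hbf]
  | all f ihf =>
    intro m hm as bs a0 b0 hbf
    have hm' : qr f + 1 ≤ m := hm
    obtain ⟨m', rfl⟩ : ∃ m', m = m' + 1 := ⟨m - 1, by omega⟩
    simp only [BoundedFormula.realize_all]
    constructor
    · intro h x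
      obtain ⟨y, hy⟩ := hbf.2.2 x
      rw [← Fin.cons_snoc_eq_snoc_cons, ← Fin.cons_snoc_eq_snoc_cons] at hy
      exact (ihf m' (by omega) _ _ a0 b0 hy).mp (h y)
    · intro h x
      obtain ⟨y, hy⟩ := hbf.2.1 x
      rw [← Fin.cons_snoc_eq_snoc_cons, ← Fin.cons_snoc_eq_snoc_cons] at hy
      exact (ihf m' (by omega) _ _ a0 b0 hy).mpr (h y)
-- Section 2: distance between nodes of a tree of lists
open Classical in
/-- Length of the longest common prefix. -/
noncomputable def cp {α : Type} : List α → List α → ℕ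
  | x :: s, y :: t => if x = y then cp s t + 1 else 0
  | _, _ => 0

theorem cp_nil_left {α : Type} (t : List α) : cp [] t = 0 := by cases t <;> rfl

theorem cp_nil_right {α : Type} (s : List α) : cp s [] = 0 := by cases s <;> rfl

theorem cp_le_left {α : Type} : ∀ s t : List α, cp s t ≤ s.length
  | [], t => by rw [cp_nil_left]; exact Nat.zero_le _
  | x :: s, [] => by rw [cp_nil_right]; exact Nat.zero_le _
  | x :: s, y :: t => by
    rw [cp]
    split
    · simpa using cp_le_left s t
    · exact Nat.zero_le _

theorem cp_comm {α : Type} : ∀ s t : List α, cp s t = cp t s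
  | [], t => by rw [cp_nil_left, cp_nil_right]
  | x :: s, [] => by rw [cp_nil_left, cp_nil_right]
  | x :: s, y :: t => by
    rw [cp, cp]
    rcases eq_or_ne x y with h | h
    · subst h; simp [cp_comm s t]
    · simp [h, Ne.symm h]

theorem cp_le_right {α : Type} (s t : List α) : cp s t ≤ t.length := by
  rw [cp_comm]; exact cp_le_left t s

theorem cp_self {α : Type} : ∀ s : List α, cp s s = s.length
  | [] => rfl
  | x :: s => by rw [cp]; simp [cp_self s]

theorem cp_append_single {α : Type} : ∀ (s : List α) (x : α), cp s (s ++ [x]) = s.length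
  | [], x => by rw [cp_nil_left]; rfl
  | y :: s, x => by rw [List.cons_append, cp]; simp [cp_append_single s x]

theorem cp_eq_of_full {α : Type} : ∀ s t : List α, cp s t = s.length → cp s t = t.length → s = t
  | [], [], _, _ => rfl
  | [], y :: t, h1, h2 => by rw [cp_nil_left] at h2; simp at h2
  | x :: s, [], h1, h2 => by rw [cp_nil_right] at h1; simp at h1
  | x :: s, y :: t, h1, h2 => by
    rw [cp] at h1 h2
    by_cases h : x = y
    · subst h
      rw [if_pos rfl] at h1 h2
      simp only [List.length_cons] at h1 h2
      rw [cp_eq_of_full s t (by omega) (by omega)]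
    · rw [if_neg h] at h1; simp at h1

theorem cp_min {α : Type} : ∀ s t u : List α, min (cp s t) (cp t u) ≤ cp s u
  | [], t, u => by rw [cp_nil_left]; simp
  | x :: s, [], u => by rw [cp_nil_right]; simp
  | x :: s, y :: t, [] => by rw [cp_nil_right]; simp
  | x :: s, y :: t, z :: u => by
    rcases eq_or_ne x y with hxy | hxy
    · rcases eq_or_ne y z with hyz | hyz
      · subst hxy; subst hyz
        rw [cp, cp, cp, if_pos rfl, if_pos rfl, if_pos rfl]
        have := cp_min s t u
        omega
      · have h0 : cp (y :: t) (z :: u) = 0 := by rw [cp, if_neg hyz]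
        simp [h0]
    · have h0 : cp (x :: s) (y :: t) = 0 := by rw [cp, if_neg hxy]
      simp [h0]

/-- Length of the longest common suffix. -/
noncomputable def cs {α : Type} (s t : List α) : ℕ := cp s.reverse t.reverse

/-- Tree distance between two lists. -/
noncomputable def td {α : Type} (s t : List α) : ℕ :=
  (s.length - cs s t) + (t.length - cs s t)

theorem cs_le_left {α : Type} (s t : List α) : cs s t ≤ s.length := by
  simpa [cs] using cp_le_left s.reverse t.reverse

theorem cs_le_right {α : Type} (s t : List α) : cs s t ≤ t.length := by
  simpa [cs] using cp_le_right s.reverse t.reverse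

theorem cs_comm {α : Type} (s t : List α) : cs s t = cs t s := cp_comm _ _

theorem td_comm {α : Type} (s t : List α) : td s t = td t s := by
  rw [td, td, cs_comm]; omega

theorem cs_self {α : Type} (s : List α) : cs s s = s.length := by
  simpa [cs] using cp_self s.reverse

theorem td_self {α : Type} (s : List α) : td s s = 0 := by
  rw [td, cs_self]; omega

theorem cs_cons {α : Type} (s : List α) (x : α) : cs s (x :: s) = s.length := by
  rw [cs, List.reverse_cons]
  simpa using cp_append_single s.reverse x

theorem td_cons {α : Type} (s : List α) (x : α) : td s (x :: s) = 1 := by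
  rw [td, cs_cons]; simp

theorem eq_of_td_eq_zero {α : Type} {s t : List α} (h : td s t = 0) : s = t := by
  rw [td] at h
  have h1 := cs_le_left s t
  have h2 := cs_le_right s t
  have e1 : cs s t = s.length := by omega
  have e2 : cs s t = t.length := by omega
  have := cp_eq_of_full s.reverse t.reverse (by simpa [cs] using e1) (by simpa [cs] using e2)
  simpa using congrArg List.reverse this

theorem td_triangle {α : Type} (s t u : List α) : td s u ≤ td s t + td t u := by
  have hmin : min (cs s t) (cs t u) ≤ cs s u := cp_min _ _ _
  have h1 := cs_le_left s t
  have h2 := cs_le_right s t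
  have h3 := cs_le_left t u
  have h4 := cs_le_right t u
  have h5 := cs_le_left s u
  have h6 := cs_le_right s u
  rw [td, td, td]
  omega

theorem length_le_of_td {α : Type} (s t : List α) : t.length ≤ s.length + td s t := by
  have h1 := cs_le_left s t
  have h2 := cs_le_right s t
  rw [td]
  omega

/-- If the tree distance is at least 2 the lists are distinct and neither extends the other. -/
theorem td_ge_two {α : Type} {s t : List α} (h : 2 ≤ td s t) :
    s ≠ t ∧ (∀ x, t ≠ x :: s) ∧ (∀ x, s ≠ x :: t) := by
  refine ⟨?_, ?_, ?_⟩
  · rintro rfl; rw [td_self] at h; omega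
  · rintro x rfl; rw [td_cons] at h; omega
  · rintro x h'
    rw [h', td_comm, td_cons] at h; omega
-- Section 3: unravelling, truncation, padded sums
/-- Reversed paths from `u` in `M`: lists growing at the head. -/
inductive RP (M : Kripke) (u : M.W) : List M.W → Prop
  | nil : RP M u []
  | cons {x : M.W} {l : List M.W} : RP M u l → M.R (l.headD u) x → RP M u (x :: l)

theorem RP.inv {M : Kripke} {u x : M.W} {l : List M.W} (h : RP M u (x :: l)) :
    RP M u l ∧ M.R (l.headD u) x := by cases h with | cons h hr => exact ⟨h, hr⟩

/-- The unravelling of `(M, u)` truncated at depth `n`. -/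
def Tr (M : Kripke) (u : M.W) (n : ℕ) : Kripke where
  W := {l : List M.W // RP M u l ∧ l.length ≤ n}
  nonempty := ⟨⟨[], RP.nil, by simp⟩⟩
  R a b := ∃ x, b.1 = x :: a.1
  V p := {a | a.1.headD u ∈ M.V p}

/-- Index type for the components of the padded models. -/
abbrev Jdx : Type := Unit ⊕ ℕ ⊕ ℕ

/-- Padded sum: one distinguished component together with `ℕ` copies of the full
unravelling and `ℕ` copies of the truncated unravelling; the components `j` with
`tr j` are truncated at depth `n`. -/
def Big (M : Kripke) (u : M.W) (n : ℕ) (tr : Jdx → Prop) : Kripke where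
  W := {jl : Jdx × List M.W // RP M u jl.2 ∧ (tr jl.1 → jl.2.length ≤ n)}
  nonempty := ⟨⟨(Sum.inl (), []), RP.nil, fun _ => by simp⟩⟩
  R a b := a.1.1 = b.1.1 ∧ ∃ x, b.1.2 = x :: a.1.2
  V p := {a | a.1.2.headD u ∈ M.V p}

def trA : Jdx → Prop := fun j => ∃ c, j = Sum.inr (Sum.inr c)
def trB : Jdx → Prop := fun j => j = Sum.inl () ∨ ∃ c, j = Sum.inr (Sum.inr c)

def BigA (M : Kripke) (u : M.W) (n : ℕ) : Kripke := Big M u n trA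
def BigB (M : Kripke) (u : M.W) (n : ℕ) : Kripke := Big M u n trB

def rootA (M : Kripke) (u : M.W) (n : ℕ) : (BigA M u n).W :=
  ⟨(Sum.inl (), []), RP.nil, fun _ => by simp⟩
def rootB (M : Kripke) (u : M.W) (n : ℕ) : (BigB M u n).W :=
  ⟨(Sum.inl (), []), RP.nil, fun _ => by simp⟩
def rootT (M : Kripke) (u : M.W) (n : ℕ) : (Tr M u n).W := ⟨[], RP.nil, by simp⟩

/-- `(M, u)` is bisimilar to the distinguished component of `BigA`. -/
theorem bisim_M_BigA (σ : Set ℕ) (M : Kripke) (u : M.W) (n : ℕ) :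
    Bisimilar σ M (BigA M u n) u (rootA M u n) := by
  refine ⟨fun w a => a.1.1 = Sum.inl () ∧ a.1.2.headD u = w, fun w a hwa => ?_, rfl, rfl⟩
  obtain ⟨hj, hw⟩ := hwa
  refine ⟨fun p _ => by subst hw; exact Iff.rfl, ?_, ?_⟩
  · intro v hv
    refine ⟨⟨(Sum.inl (), v :: a.1.2), RP.cons a.2.1 (hw ▸ hv), fun h => ?_⟩,
      ⟨hj, v, rfl⟩, rfl, rfl⟩
    · exact absurd h (by rintro ⟨c, hc⟩; cases hc)
  · rintro b ⟨hj', x, hx⟩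
    have := b.2.1
    rw [hx] at this
    obtain ⟨-, hr⟩ := this.inv
    exact ⟨x, hw ▸ hr, by rw [← hj', hj], by rw [hx]; rfl⟩

/-- The distinguished component of `BigB` is bisimilar to the truncated unravelling. -/
theorem bisim_BigB_Tr (σ : Set ℕ) (M : Kripke) (u : M.W) (n : ℕ) :
    Bisimilar σ (BigB M u n) (Tr M u n) (rootB M u n) (rootT M u n) := by
  refine ⟨fun a t => a.1.1 = Sum.inl () ∧ a.1.2 = t.1, fun a t hat => ?_, rfl, rfl⟩
  obtain ⟨hj, hl⟩ := hat
  refine ⟨fun p _ => ?_, ?_, ?_⟩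
  · show a.1.2.headD u ∈ M.V p ↔ t.1.headD u ∈ M.V p
    rw [hl]
  · rintro b ⟨hj', x, hx⟩
    have hrp : RP M u b.1.2 := b.2.1
    have hlen : b.1.2.length ≤ n := b.2.2 (by rw [← hj', hj]; exact Or.inl rfl)
    refine ⟨⟨b.1.2, hrp, hlen⟩, ⟨x, ?_⟩, by rw [← hj', hj], rfl⟩
    show b.1.2 = x :: t.1
    rw [hx, hl]
  · rintro s ⟨x, hx⟩
    refine ⟨⟨(Sum.inl (), s.1), hx ▸ s.2.1, fun _ => s.2.2⟩, ⟨hj, x, ?_⟩, rfl, rfl⟩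
    show s.1 = x :: a.1.2
    rw [hx, hl]
-- Section 4: the core game strategy
theorem fresh_idx {k : ℕ} (g : Fin k → Jdx) :
    ∃ c : ℕ, ∀ i, g i ≠ Sum.inr (Sum.inl c) ∧ g i ≠ Sum.inr (Sum.inr c) := by
  classical
  set f : Fin k → ℕ := fun i =>
    match g i with
    | Sum.inr (Sum.inl c) => c
    | Sum.inr (Sum.inr c) => c
    | _ => 0 with hf
  refine ⟨Finset.univ.sup f + 1, fun i => ⟨fun h => ?_, fun h => ?_⟩⟩
  · have h1 : f i = Finset.univ.sup f + 1 := by rw [hf]; simp only; rw [h]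
    have h2 : f i ≤ Finset.univ.sup f := Finset.le_sup (Finset.mem_univ i)
    omega
  · have h1 : f i = Finset.univ.sup f + 1 := by rw [hf]; simp only; rw [h]
    have h2 : f i ≤ Finset.univ.sup f := Finset.le_sup (Finset.mem_univ i)
    omega

/-- The allowed pairs of components for corresponding pebbles. -/
def COMP (jA jB : Jdx) : Prop :=
  (jA = Sum.inl () ∧ (jB = Sum.inl () ∨ ∃ c, jB = Sum.inr (Sum.inl c))) ∨
  ((∃ c, jA = Sum.inr (Sum.inl c)) ∧ (∃ c', jB = Sum.inr (Sum.inl c'))) ∨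
  ((∃ c, jA = Sum.inr (Sum.inr c)) ∧ (jB = Sum.inl () ∨ ∃ c', jB = Sum.inr (Sum.inr c')))

theorem not_trA_inl : ¬ trA (Sum.inl ()) := by rintro ⟨c, hc⟩; cases hc
theorem not_trA_U (c : ℕ) : ¬ trA (Sum.inr (Sum.inl c)) := by rintro ⟨c', hc⟩; cases hc
theorem trA_T (c : ℕ) : trA (Sum.inr (Sum.inr c)) := ⟨c, rfl⟩
theorem not_trB_U (c : ℕ) : ¬ trB (Sum.inr (Sum.inl c)) := by
  intro h
  rcases h with h | ⟨c', hc⟩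
  · exact absurd h (by simp)
  · exact absurd hc (by simp)
theorem trB_inl : trB (Sum.inl ()) := Or.inl rfl
theorem trB_T (c : ℕ) : trB (Sum.inr (Sum.inr c)) := Or.inr ⟨c, rfl⟩

section Core

variable (M : Kripke) (u : M.W) (n : ℕ)

/-- The invariant maintained by Duplicator with `r` rounds remaining. -/
def INV (r : ℕ) {k : ℕ} (as : Fin k → (BigA M u n).W) (bs : Fin k → (BigB M u n).W) : Prop :=
  (∀ i, (as i).1.2 = (bs i).1.2) ∧
  (∀ i, COMP (as i).1.1 (bs i).1.1) ∧
  (∀ i, (as i).1.1 = Sum.inl () → (bs i).1.1 = Sum.inl () →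
    (as i).1.2.length + 2 ^ r ≤ n + 1) ∧
  (∀ i i', ¬(((as i).1.1 = (as i').1.1) ↔ ((bs i).1.1 = (bs i').1.1)) →
    2 ^ r < td (as i).1.2 (as i').1.2)

variable {M u n}

theorem INV.bf0 {r k : ℕ} {as : Fin k → (BigA M u n).W} {bs : Fin k → (BigB M u n).W}
    (h : INV M u n r as bs) : BF0 (BigA M u n) (BigB M u n) as bs := by
  classical
  obtain ⟨hl, hcomp, hdeep, hmis⟩ := h
  refine ⟨fun i p => ?_, fun i i' => ?_, fun i i' => ?_⟩
  · show (as i).1.2.headD u ∈ M.V p ↔ (bs i).1.2.headD u ∈ M.V p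
    rw [hl i]
  · show ((as i).1.1 = (as i').1.1 ∧ ∃ x, (as i').1.2 = x :: (as i).1.2) ↔
      ((bs i).1.1 = (bs i').1.1 ∧ ∃ x, (bs i').1.2 = x :: (bs i).1.2)
    by_cases hm : ((as i).1.1 = (as i').1.1) ↔ ((bs i).1.1 = (bs i').1.1)
    · exact and_congr hm (by rw [hl i, hl i'])
    · have htd := hmis i i' hm
      have h2 : 2 ≤ td (as i).1.2 (as i').1.2 := by
        have := Nat.one_le_two_pow (n := r); omega
      have h2' : 2 ≤ td (bs i).1.2 (bs i').1.2 := by rw [← hl i, ← hl i']; exact h2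
      refine iff_of_false ?_ ?_
      · rintro ⟨-, x, hx⟩; exact (td_ge_two h2).2.1 x hx
      · rintro ⟨-, x, hx⟩; exact (td_ge_two h2').2.1 x hx
  · have e1 : (as i = as i') ↔ ((as i).1.1 = (as i').1.1 ∧ (as i).1.2 = (as i').1.2) := by
      exact Subtype.ext_iff.trans Prod.ext_iff
    have e2 : (bs i = bs i') ↔ ((bs i).1.1 = (bs i').1.1 ∧ (bs i).1.2 = (bs i').1.2) := by
      exact Subtype.ext_iff.trans Prod.ext_iff
    rw [e1, e2]
    by_cases hm : ((as i).1.1 = (as i').1.1) ↔ ((bs i).1.1 = (bs i').1.1)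
    · exact and_congr hm (by rw [hl i, hl i'])
    · have htd := hmis i i' hm
      have h2 : 2 ≤ td (as i).1.2 (as i').1.2 := by
        have := Nat.one_le_two_pow (n := r); omega
      have h2' : 2 ≤ td (bs i).1.2 (bs i').1.2 := by rw [← hl i, ← hl i']; exact h2
      refine iff_of_false ?_ ?_
      · rintro ⟨-, hx⟩; exact (td_ge_two h2).1 hx
      · rintro ⟨-, hx⟩; exact (td_ge_two h2').1 hx

/-- Extending the invariant by a new matched pair. -/
theorem INV.extend {r k : ℕ} {as : Fin k → (BigA M u n).W} {bs : Fin k → (BigB M u n).W}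
    (h : INV M u n (r + 1) as bs) {a : (BigA M u n).W} {b : (BigB M u n).W}
    (hab : a.1.2 = b.1.2)
    (hc : COMP a.1.1 b.1.1)
    (hd : a.1.1 = Sum.inl () → b.1.1 = Sum.inl () → a.1.2.length + 2 ^ r ≤ n + 1)
    (hm : ∀ i, ¬((a.1.1 = (as i).1.1) ↔ (b.1.1 = (bs i).1.1)) →
      2 ^ r < td a.1.2 (as i).1.2) :
    INV M u n r (Fin.snoc as a) (Fin.snoc bs b) := by
  obtain ⟨hl, hcomp, hdeep, hmis⟩ := h
  have pow_lt : (2:ℕ) ^ r < 2 ^ (r+1) := Nat.pow_lt_pow_right one_lt_two (Nat.lt_succ_self r)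
  refine ⟨fun i => ?_, fun i => ?_, fun i h1 h2 => ?_, fun i i' hmm => ?_⟩
  · refine Fin.lastCases ?_ (fun j => ?_) i <;> simp only [Fin.snoc_last, Fin.snoc_castSucc]
    · exact hab
    · exact hl j
  · refine Fin.lastCases ?_ (fun j => ?_) i <;> simp only [Fin.snoc_last, Fin.snoc_castSucc]
    · exact hc
    · exact hcomp j
  · revert h1 h2
    refine Fin.lastCases ?_ (fun j => ?_) i <;> simp only [Fin.snoc_last, Fin.snoc_castSucc]
    · exact hd
    · intro h1 h2; have := hdeep j h1 h2; omega
  · revert hmm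
    refine Fin.lastCases ?_ (fun j => ?_) i <;>
      refine Fin.lastCases ?_ (fun j' => ?_) i' <;>
      simp only [Fin.snoc_last, Fin.snoc_castSucc] <;> intro hmm
    · exact absurd trivial hmm
    · exact hm j' hmm
    · rw [td_comm]
      refine hm j fun hx => hmm ?_
      exact ⟨fun h1 => (hx.mp h1.symm).symm, fun h1 => (hx.mpr h1.symm).symm⟩
    · have := hmis j j' hmm; omega

end Core
-- Section 5: Duplicator's winning strategy
section Core2

variable {M : Kripke} {u : M.W} {n : ℕ}

theorem core : ∀ (r : ℕ) {k : ℕ} (as : Fin k → (BigA M u n).W)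
    (bs : Fin k → (BigB M u n).W), INV M u n r as bs →
    BF (BigA M u n) (BigB M u n) r as bs := by
  intro r
  induction r with
  | zero => intro k as bs h; exact h.bf0
  | succ r ih =>
    intro k as bs h
    have hp : (2:ℕ) ^ (r+1) = 2 ^ r + 2 ^ r := by rw [pow_succ]; omega
    have hp1 : (1:ℕ) ≤ 2 ^ r := Nat.one_le_two_pow
    refine ⟨h.bf0, ?_, ?_⟩
    · -- forth
      intro a
      by_cases hnear : ∃ i, (as i).1.1 = a.1.1 ∧ td a.1.2 (as i).1.2 ≤ 2 ^ r
      · obtain ⟨i, hji, hti⟩ := hnear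
        have hcompi := h.2.1 i
        have hlsame := h.1 i
        have hlen1 := length_le_of_td (as i).1.2 a.1.2
        have htdc : td (as i).1.2 a.1.2 = td a.1.2 (as i).1.2 := td_comm _ _
        have hlen : trB (bs i).1.1 → a.1.2.length ≤ n := by
          intro htr
          rcases hcompi with ⟨hA, hB | ⟨c, hB⟩⟩ | ⟨⟨c, hA⟩, c', hB⟩ | ⟨⟨c, hA⟩, hB⟩
          · have hd := h.2.2.1 i hA hB
            omega
          · rw [hB] at htr; exact absurd htr (not_trB_U c)
          · rw [hB] at htr; exact absurd htr (not_trB_U c')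
          · have := a.2.2 (by rw [← hji, hA]; exact trA_T c)
            omega
        refine ⟨⟨((bs i).1.1, a.1.2), a.2.1, hlen⟩, ih _ _ (h.extend rfl ?_ ?_ ?_)⟩
        · show COMP a.1.1 (bs i).1.1
          rw [← hji]; exact hcompi
        · show a.1.1 = Sum.inl () → (bs i).1.1 = Sum.inl () → _
          intro h1 h2
          have hd := h.2.2.1 i (by rw [hji, h1]) h2
          omega
        · intro i' hmm
          have hmis' : ¬(((as i).1.1 = (as i').1.1) ↔ ((bs i).1.1 = (bs i').1.1)) :=
            fun hx => hmm ⟨fun h1 => hx.mp (hji.trans h1),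
              fun h2 => hji.symm.trans (hx.mpr h2)⟩
          have htd := h.2.2.2 i i' hmis'
          have htr := td_triangle (as i).1.2 a.1.2 (as i').1.2
          have htr2 := td_triangle a.1.2 (as i).1.2 (as i').1.2
          omega
      · push_neg at hnear
        obtain ⟨c, hc⟩ := fresh_idx (fun i => (bs i).1.1)
        have hmgen : ∀ (jb : Jdx), (∀ i, jb ≠ (bs i).1.1) →
            ∀ i, ¬((a.1.1 = (as i).1.1) ↔ (jb = (bs i).1.1)) → 2 ^ r < td a.1.2 (as i).1.2 := by
          intro jb hjb i hmm
          by_cases hA : a.1.1 = (as i).1.1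
          · exact hnear i hA.symm
          · exact absurd (iff_of_false hA (hjb i)) hmm
        rcases hja : a.1.1 with x | c₀ | c₀
        · cases x
          refine ⟨⟨(Sum.inr (Sum.inl c), a.1.2), a.2.1,
            fun htr => absurd htr (not_trB_U c)⟩, ih _ _ (h.extend rfl ?_ ?_ ?_)⟩
          · show COMP a.1.1 (Sum.inr (Sum.inl c))
            rw [hja]; exact Or.inl ⟨rfl, Or.inr ⟨c, rfl⟩⟩
          · intro _ h2; exact absurd h2 (by simp)
          · exact hmgen _ (fun i => fun hh => (hc i).1 hh.symm)
        · refine ⟨⟨(Sum.inr (Sum.inl c), a.1.2), a.2.1,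
            fun htr => absurd htr (not_trB_U c)⟩, ih _ _ (h.extend rfl ?_ ?_ ?_)⟩
          · show COMP a.1.1 (Sum.inr (Sum.inl c))
            rw [hja]; exact Or.inr (Or.inl ⟨⟨c₀, rfl⟩, ⟨c, rfl⟩⟩)
          · intro h1; rw [hja] at h1; exact absurd h1 (by simp)
          · exact hmgen _ (fun i => fun hh => (hc i).1 hh.symm)
        · refine ⟨⟨(Sum.inr (Sum.inr c), a.1.2), a.2.1,
            fun _ => a.2.2 (by rw [hja]; exact trA_T c₀)⟩, ih _ _ (h.extend rfl ?_ ?_ ?_)⟩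
          · show COMP a.1.1 (Sum.inr (Sum.inr c))
            rw [hja]; exact Or.inr (Or.inr ⟨⟨c₀, rfl⟩, Or.inr ⟨c, rfl⟩⟩)
          · intro h1; rw [hja] at h1; exact absurd h1 (by simp)
          · exact hmgen _ (fun i => fun hh => (hc i).2 hh.symm)
    · -- back
      intro b
      by_cases hnear : ∃ i, (bs i).1.1 = b.1.1 ∧ td b.1.2 (bs i).1.2 ≤ 2 ^ r
      · obtain ⟨i, hji, hti⟩ := hnear
        have hcompi := h.2.1 i
        have hlsame := h.1 i
        have hlen1 := length_le_of_td (bs i).1.2 b.1.2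
        have htdc : td (bs i).1.2 b.1.2 = td b.1.2 (bs i).1.2 := td_comm _ _
        have hleq : (as i).1.2.length = (bs i).1.2.length := by rw [hlsame]
        have hlen : trA (as i).1.1 → b.1.2.length ≤ n := by
          intro htr
          rcases hcompi with ⟨hA, hB⟩ | ⟨⟨c, hA⟩, c', hB⟩ | ⟨⟨c, hA⟩, hB⟩
          · rw [hA] at htr; exact absurd htr not_trA_inl
          · rw [hA] at htr; exact absurd htr (not_trA_U c)
          · refine le_trans (b.2.2 ?_) le_rfl
            rcases hB with hB | ⟨c', hB⟩
            · rw [← hji, hB]; exact trB_inl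
            · rw [← hji, hB]; exact trB_T c'
        refine ⟨⟨((as i).1.1, b.1.2), b.2.1, hlen⟩, ih _ _ (h.extend rfl ?_ ?_ ?_)⟩
        · show COMP (as i).1.1 b.1.1
          rw [← hji]; exact hcompi
        · show (as i).1.1 = Sum.inl () → b.1.1 = Sum.inl () → _
          intro h1 h2
          show b.1.2.length + 2 ^ r ≤ n + 1
          have hd := h.2.2.1 i h1 (by rw [hji, h2])
          omega
        · intro i' hmm
          show 2 ^ r < td b.1.2 (as i').1.2
          have hmis' : ¬(((as i).1.1 = (as i').1.1) ↔ ((bs i).1.1 = (bs i').1.1)) :=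
            fun hx => hmm ⟨fun h1 => hji.symm.trans (hx.mp h1),
              fun h2 => hx.mpr (hji.trans h2)⟩
          have htd := h.2.2.2 i i' hmis'
          have hls' := h.1 i'
          have htr := td_triangle (bs i).1.2 b.1.2 (bs i').1.2
          have htr2 := td_triangle b.1.2 (bs i).1.2 (bs i').1.2
          have he1 : td b.1.2 (as i').1.2 = td b.1.2 (bs i').1.2 := by rw [hls']
          have he2 : td (as i).1.2 (as i').1.2 = td (bs i).1.2 (bs i').1.2 := by
            rw [hls', hlsame]
          omega
      · push_neg at hnear
        obtain ⟨c, hc⟩ := fresh_idx (fun i => (as i).1.1)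
        have hmgen : ∀ (ja : Jdx), (∀ i, ja ≠ (as i).1.1) →
            ∀ i, ¬((ja = (as i).1.1) ↔ (b.1.1 = (bs i).1.1)) → 2 ^ r < td b.1.2 (bs i).1.2 := by
          intro ja hja i hmm
          by_cases hB : b.1.1 = (bs i).1.1
          · exact hnear i hB.symm
          · exact absurd (iff_of_false (hja i) hB) hmm
        have hmgen' : ∀ (ja : Jdx), (∀ i, ja ≠ (as i).1.1) →
            ∀ i, ¬((ja = (as i).1.1) ↔ (b.1.1 = (bs i).1.1)) → 2 ^ r < td b.1.2 (as i).1.2 := by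
          intro ja hja i hmm
          rw [h.1 i]
          exact hmgen ja hja i hmm
        rcases hjb : b.1.1 with x | c₀ | c₀
        · cases x
          refine ⟨⟨(Sum.inr (Sum.inr c), b.1.2), b.2.1,
            fun _ => b.2.2 (by rw [hjb]; exact trB_inl)⟩, ih _ _ (h.extend rfl ?_ ?_ ?_)⟩
          · show COMP (Sum.inr (Sum.inr c)) b.1.1
            rw [hjb]; exact Or.inr (Or.inr ⟨⟨c, rfl⟩, Or.inl rfl⟩)
          · intro h1; exact absurd h1 (by simp)
          · exact hmgen' _ (fun i => fun hh => (hc i).2 hh.symm)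
        · refine ⟨⟨(Sum.inr (Sum.inl c), b.1.2), b.2.1,
            fun htr => absurd htr (not_trA_U c)⟩, ih _ _ (h.extend rfl ?_ ?_ ?_)⟩
          · show COMP (Sum.inr (Sum.inl c)) b.1.1
            rw [hjb]; exact Or.inr (Or.inl ⟨⟨c, rfl⟩, ⟨c₀, rfl⟩⟩)
          · intro h1; exact absurd h1 (by simp)
          · exact hmgen' _ (fun i => fun hh => (hc i).1 hh.symm)
        · refine ⟨⟨(Sum.inr (Sum.inr c), b.1.2), b.2.1,
            fun _ => b.2.2 (by rw [hjb]; exact trB_T c₀)⟩, ih _ _ (h.extend rfl ?_ ?_ ?_)⟩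
          · show COMP (Sum.inr (Sum.inr c)) b.1.1
            rw [hjb]; exact Or.inr (Or.inr ⟨⟨c, rfl⟩, Or.inr ⟨c₀, rfl⟩⟩)
          · intro h1; exact absurd h1 (by simp)
          · exact hmgen' _ (fun i => fun hh => (hc i).2 hh.symm)

end Core2
-- Section 6: finite modal types of bounded depth
/-- Big conjunction. -/
def MLand (L : List ML) : ML := L.foldr ML.and ML.top

/-- Big disjunction. -/
def MLorL (L : List ML) : ML := ML.not (MLand (L.map ML.not))

/-- Box. -/
def MLbox (χ : ML) : ML := ML.not (ML.dia (ML.not χ))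

theorem sat_MLand {M : Kripke} {w : M.W} {L : List ML} :
    ML.sat M w (MLand L) ↔ ∀ ψ ∈ L, ML.sat M w ψ := by
  induction L with
  | nil => simp [MLand, ML.sat]
  | cons ψ L ih =>
    rw [MLand, List.foldr_cons]
    show ML.sat M w ψ ∧ ML.sat M w (MLand L) ↔ _
    rw [ih, List.forall_mem_cons]

theorem sat_MLorL {M : Kripke} {w : M.W} {L : List ML} :
    ML.sat M w (MLorL L) ↔ ∃ ψ ∈ L, ML.sat M w ψ := by
  rw [MLorL, show ML.sat M w (MLand (L.map ML.not)).not ↔ ¬ ML.sat M w (MLand (L.map ML.not))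
      from Iff.rfl, sat_MLand]
  push_neg
  constructor
  · intro h
    obtain ⟨ψ, hψ, hs⟩ := h
    simp only [List.mem_map] at hψ
    obtain ⟨χ, hχ, rfl⟩ := hψ
    exact ⟨χ, hχ, not_not.mp hs⟩
  · rintro ⟨ψ, hψ, hs⟩
    exact ⟨ψ.not, List.mem_map.mpr ⟨ψ, hψ, rfl⟩, fun h => h hs⟩

theorem sat_MLbox {M : Kripke} {w : M.W} {χ : ML} :
    ML.sat M w (MLbox χ) ↔ ∀ v, M.R w v → ML.sat M v χ := by
  rw [MLbox]
  show ¬ (∃ v, M.R w v ∧ ¬ ML.sat M v χ) ↔ _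
  push_neg
  simp [not_not]

theorem depth_MLand {L : List ML} {d : ℕ} (h : ∀ ψ ∈ L, ML.depth ψ ≤ d) :
    ML.depth (MLand L) ≤ d := by
  induction L with
  | nil => simp [MLand, ML.depth]
  | cons ψ L ih =>
    simp only [MLand, List.foldr_cons, ML.depth, max_le_iff]
    exact ⟨h ψ (by simp), ih fun ψ' h' => h ψ' (by simp [h'])⟩

theorem depth_MLorL {L : List ML} {d : ℕ} (h : ∀ ψ ∈ L, ML.depth ψ ≤ d) :
    ML.depth (MLorL L) ≤ d := by
  rw [MLorL]
  show ML.depth (MLand (L.map ML.not)) ≤ d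
  refine depth_MLand fun ψ hψ => ?_
  simp only [List.mem_map] at hψ
  obtain ⟨χ, hχ, rfl⟩ := hψ
  exact h χ hχ

/-- Hintikka types of depth `n` over `σF`. -/
def HT (σF : Finset ℕ) : ℕ → Type
  | 0 => Finset {p : ℕ // p ∈ σF}
  | n + 1 => Finset {p : ℕ // p ∈ σF} × Finset (HT σF n)

instance htFinite (σF : Finset ℕ) : ∀ n, Finite (HT σF n)
  | 0 => by unfold HT; infer_instance
  | n + 1 => by
    unfold HT
    have := htFinite σF n
    have : Finite (Finset (HT σF n)) := by
      haveI := Fintype.ofFinite (HT σF n)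
      haveI := Classical.decEq (HT σF n)
      infer_instance
    infer_instance

open Classical in
/-- The depth-`n` type of a pointed model. -/
noncomputable def typeOf (σF : Finset ℕ) (M : Kripke) : (n : ℕ) → M.W → HT σF n
  | 0, w => σF.attach.filter (fun p => w ∈ M.V p.1)
  | n + 1, w =>
    (σF.attach.filter (fun p => w ∈ M.V p.1),
      Set.Finite.toFinset (Set.toFinite {t : HT σF n | ∃ v, M.R w v ∧ typeOf σF M n v = t}))

/-- The description of a zero-dimensional type. -/
noncomputable def desc (σF : Finset ℕ) (S : Finset {p : ℕ // p ∈ σF}) : ML :=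
  MLand (σF.attach.toList.map
    (fun p => if p ∈ S then ML.var p.1 else ML.not (ML.var p.1)))

/-- The characteristic modal formula of a type. -/
noncomputable def toML (σF : Finset ℕ) : (n : ℕ) → HT σF n → ML
  | 0, S => desc σF S
  | n + 1, t =>
    ML.and (desc σF t.1)
      (ML.and (MLand (t.2.toList.map (fun γ => ML.dia (toML σF n γ))))
        (MLbox (MLorL (t.2.toList.map (toML σF n)))))

theorem depth_desc (σF : Finset ℕ) (S : Finset {p : ℕ // p ∈ σF}) :
    ML.depth (desc σF S) ≤ 0 := by
  refine depth_MLand fun ψ hψ => ?_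
  simp only [List.mem_map] at hψ
  obtain ⟨p, hp, rfl⟩ := hψ
  split <;> simp [ML.depth]

theorem depth_toML (σF : Finset ℕ) : ∀ (n : ℕ) (t : HT σF n), ML.depth (toML σF n t) ≤ n
  | 0, S => depth_desc σF S
  | n + 1, t => by
    rw [toML]
    simp only [ML.depth, max_le_iff]
    refine ⟨le_trans (depth_desc σF t.1) (by omega), ?_, ?_⟩
    · refine le_trans (depth_MLand fun ψ hψ => ?_) le_rfl
      simp only [List.mem_map] at hψ
      obtain ⟨γ, hγ, rfl⟩ := hψ
      show ML.depth (toML σF n γ) + 1 ≤ n + 1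
      have := depth_toML σF n γ
      omega
    · show ML.depth (MLorL (t.2.toList.map (toML σF n))) + 1 ≤ n + 1
      have : ML.depth (MLorL (t.2.toList.map (toML σF n))) ≤ n := by
        refine depth_MLorL fun ψ hψ => ?_
        simp only [List.mem_map] at hψ
        obtain ⟨γ, hγ, rfl⟩ := hψ
        exact depth_toML σF n γ
      omega

theorem sat_desc {σF : Finset ℕ} {M : Kripke} {w : M.W} {S : Finset {p : ℕ // p ∈ σF}} :
    ML.sat M w (desc σF S) ↔ ∀ p : {p : ℕ // p ∈ σF}, (p ∈ S ↔ w ∈ M.V p.1) := by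
  rw [desc, sat_MLand]
  constructor
  · intro h p
    have hmem : p ∈ σF.attach.toList := by simp [Finset.mem_toList]
    by_cases hp : p ∈ S
    · have := h (ML.var p.1) (List.mem_map.mpr ⟨p, hmem, by rw [if_pos hp]⟩)
      exact ⟨fun _ => this, fun _ => hp⟩
    · have := h (ML.not (ML.var p.1)) (List.mem_map.mpr ⟨p, hmem, by rw [if_neg hp]⟩)
      exact ⟨fun h' => absurd h' hp, fun h' => absurd h' this⟩
  · intro h ψ hψ
    simp only [List.mem_map] at hψ
    obtain ⟨p, hp, rfl⟩ := hψ
    by_cases hps : p ∈ S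
    · rw [if_pos hps]; exact (h p).mp hps
    · rw [if_neg hps]; exact fun h' => hps ((h p).mpr h')

theorem sat_toML_self (σF : Finset ℕ) :
    ∀ (n : ℕ) (M : Kripke) (w : M.W), ML.sat M w (toML σF n (typeOf σF M n w))
  | 0, M, w => by
    classical
    rw [toML, typeOf, sat_desc]
    intro p
    simp [Finset.mem_filter]
  | n + 1, M, w => by
    classical
    rw [toML, typeOf]
    refine ⟨?_, ?_, ?_⟩
    · rw [sat_desc]; intro p; simp [Finset.mem_filter]
    · rw [sat_MLand]
      intro ψ hψ
      simp only [List.mem_map, Finset.mem_toList, Set.Finite.mem_toFinset,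
        Set.mem_setOf_eq] at hψ
      obtain ⟨γ, ⟨v, hv, rfl⟩, rfl⟩ := hψ
      exact ⟨v, hv, sat_toML_self σF n M v⟩
    · rw [sat_MLbox]
      intro v hv
      rw [sat_MLorL]
      refine ⟨toML σF n (typeOf σF M n v), ?_, sat_toML_self σF n M v⟩
      simp only [List.mem_map, Finset.mem_toList, Set.Finite.mem_toFinset, Set.mem_setOf_eq]
      exact ⟨typeOf σF M n v, ⟨v, hv, rfl⟩, rfl⟩

theorem typeOf_eq_of_sat (σF : Finset ℕ) :
    ∀ (n : ℕ) (N : Kripke) (v : N.W) (t : HT σF n),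
      ML.sat N v (toML σF n t) → typeOf σF N n v = t
  | 0, N, v, t, h => by
    classical
    rw [toML] at h
    replace h := (sat_desc (S := t)).mp h
    rw [typeOf]
    apply Finset.ext
    intro p
    rw [Finset.mem_filter]
    exact ⟨fun hp => (h p).mpr hp.2, fun hp => ⟨Finset.mem_attach _ _, (h p).mp hp⟩⟩
  | n + 1, N, v, t, h => by
    classical
    obtain ⟨h1, h2, h3⟩ := h
    rw [typeOf]
    refine Prod.ext ?_ ?_
    · show σF.attach.filter _ = t.1
      rw [sat_desc] at h1
      apply Finset.ext
      intro p
      rw [Finset.mem_filter]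
      exact ⟨fun hp => (h1 p).mpr hp.2, fun hp => ⟨Finset.mem_attach _ _, (h1 p).mp hp⟩⟩
    · show Set.Finite.toFinset _ = t.2
      rw [sat_MLbox] at h3
      rw [sat_MLand] at h2
      ext γ
      simp only [Set.Finite.mem_toFinset, Set.mem_setOf_eq]
      constructor
      · rintro ⟨v', hv', rfl⟩
        have := h3 v' hv'
        rw [sat_MLorL] at this
        obtain ⟨ψ, hψ, hs⟩ := this
        simp only [List.mem_map, Finset.mem_toList] at hψ
        obtain ⟨γ', hγ', rfl⟩ := hψ
        rw [typeOf_eq_of_sat σF n N v' γ' hs]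
        exact hγ'
      · intro hγ
        have := h2 (ML.dia (toML σF n γ))
          (List.mem_map.mpr ⟨γ, Finset.mem_toList.mpr hγ, rfl⟩)
        obtain ⟨v', hv', hs⟩ := this
        exact ⟨v', hv', typeOf_eq_of_sat σF n N v' γ hs⟩
-- Section 7: equal types give bisimilar truncated unravellings
def tZero (σF : Finset ℕ) : ∀ {n : ℕ}, HT σF n → Finset {p : ℕ // p ∈ σF}
  | 0, t => t
  | _ + 1, t => t.1

theorem mem_tZero_typeOf (σF : Finset ℕ) (M : Kripke) :
    ∀ (n : ℕ) (w : M.W) (p : {p : ℕ // p ∈ σF}),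
      p ∈ tZero σF (typeOf σF M n w) ↔ w ∈ M.V p.1 := by
  classical
  intro n w p
  cases n with
  | zero =>
    show p ∈ Finset.filter _ _ ↔ _
    rw [Finset.mem_filter]
    simp
  | succ n =>
    show p ∈ Finset.filter _ _ ↔ _
    rw [Finset.mem_filter]
    simp

theorem typeOf_snd_mem (σF : Finset ℕ) (M : Kripke) (z : M.W) (e : ℕ) (γ : HT σF e) :
    γ ∈ (typeOf σF M (e + 1) z).2 ↔ ∃ x, M.R z x ∧ typeOf σF M e x = γ := by
  show γ ∈ Set.Finite.toFinset _ ↔ _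
  rw [Set.Finite.mem_toFinset]
  exact Iff.rfl

theorem bisim_Tr_of_typeOf {σF : Finset ℕ} {M N : Kripke} {w : M.W} {v : N.W} {n : ℕ}
    (h : typeOf σF M n w = typeOf σF N n v) (σ : Set ℕ) (hσ : σ ⊆ ↑σF) :
    Bisimilar σ (Tr M w n) (Tr N v n) (rootT M w n) (rootT N v n) := by
  refine ⟨fun s t => s.1.length = t.1.length ∧
      typeOf σF M (n - s.1.length) (s.1.headD w) =
        typeOf σF N (n - s.1.length) (t.1.headD v), fun s t hst => ?_, rfl, ?_⟩
  swap
  · show typeOf σF M (n - 0) w = typeOf σF N (n - 0) v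
    rw [Nat.sub_zero]
    exact h
  obtain ⟨hlen, hty⟩ := hst
  refine ⟨fun p hp => ?_, ?_, ?_⟩
  · show s.1.headD w ∈ M.V p ↔ t.1.headD v ∈ N.V p
    have hz := congrArg (tZero σF) hty
    rw [← mem_tZero_typeOf σF M (n - s.1.length) (s.1.headD w) ⟨p, hσ hp⟩, hz,
      mem_tZero_typeOf]
  · rintro s' ⟨x, hx⟩
    have hxlen : s'.1.length = s.1.length + 1 := by rw [hx]; rfl
    have hlt : s.1.length < n := by have := s'.2.2; omega
    obtain ⟨e, he⟩ : ∃ e, n - s.1.length = e + 1 := ⟨n - s.1.length - 1, by omega⟩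
    rw [he] at hty
    have hRx : M.R (s.1.headD w) x := by
      have h2 := s'.2.1
      rw [hx] at h2
      exact h2.inv.2
    have hmem : typeOf σF M e x ∈ (typeOf σF M (e + 1) (s.1.headD w)).2 :=
      (typeOf_snd_mem σF M _ e _).mpr ⟨x, hRx, rfl⟩
    rw [hty] at hmem
    obtain ⟨y, hRy, hty'⟩ := (typeOf_snd_mem σF N _ e _).mp hmem
    refine ⟨⟨y :: t.1, RP.cons t.2.1 hRy, by simp only [List.length_cons]; omega⟩,
      ⟨y, rfl⟩, ?_, ?_⟩
    · show s'.1.length = (y :: t.1).length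
      simp only [List.length_cons]
      omega
    · show typeOf σF M (n - s'.1.length) (s'.1.headD w) =
        typeOf σF N (n - s'.1.length) ((y :: t.1).headD v)
      have hidx : n - s'.1.length = e := by omega
      rw [hidx, hx]
      exact hty'.symm
  · rintro t' ⟨y, hy⟩
    have hylen : t'.1.length = t.1.length + 1 := by rw [hy]; rfl
    have hlt : s.1.length < n := by have := t'.2.2; omega
    obtain ⟨e, he⟩ : ∃ e, n - s.1.length = e + 1 := ⟨n - s.1.length - 1, by omega⟩
    rw [he] at hty
    have hRy : N.R (t.1.headD v) y := by
      have h2 := t'.2.1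
      rw [hy] at h2
      exact h2.inv.2
    have hmem : typeOf σF N e y ∈ (typeOf σF N (e + 1) (t.1.headD v)).2 :=
      (typeOf_snd_mem σF N _ e _).mpr ⟨y, hRy, rfl⟩
    rw [← hty] at hmem
    obtain ⟨x, hRx, hty'⟩ := (typeOf_snd_mem σF M _ e _).mp hmem
    refine ⟨⟨x :: s.1, RP.cons s.2.1 hRx, by simp only [List.length_cons]; omega⟩,
      ⟨x, rfl⟩, ?_, ?_⟩
    · show (x :: s.1).length = t'.1.length
      simp only [List.length_cons]
      omega
    · show typeOf σF M (n - (x :: s.1).length) ((x :: s.1).headD w) =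
        typeOf σF N (n - (x :: s.1).length) (t'.1.headD v)
      have hidx : n - (x :: s.1).length = e := by simp only [List.length_cons]; omega
      rw [hidx, hy]
      exact hty'
-- Section 8: correctness of the standard translation
theorem stAux_realize (M : Kripke) :
    ∀ (χ : ML) (k : ℕ) (v : Empty → M.W) (xs : Fin (k + 1) → M.W),
      (ML.stAux χ k).Realize v xs ↔ ML.sat M (xs (Fin.last k)) χ := by
  intro χ
  induction χ with
  | top =>
    intro k v xs
    exact iff_of_true rfl trivial
  | var p =>
    intro k v xs
    exact Iff.rfl
  | and φ ψ ihφ ihψ =>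
    intro k v xs
    show ((ML.stAux φ k) ⊓ (ML.stAux ψ k)).Realize v xs ↔ _
    rw [BoundedFormula.realize_inf, ihφ k v xs, ihψ k v xs]
    exact Iff.rfl
  | not φ ihφ =>
    intro k v xs
    show ((ML.stAux φ k).not).Realize v xs ↔ _
    rw [BoundedFormula.realize_not, ihφ k v xs]
    exact Iff.rfl
  | dia φ ihφ =>
    intro k v xs
    show (Language.BoundedFormula.ex _).Realize v xs ↔ _
    rw [BoundedFormula.realize_ex]
    show (∃ a, (Language.BoundedFormula.rel (l := 2) (show modalLang.Relations 2 from ())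
        ![Language.Term.var (Sum.inr (Fin.last k).castSucc),
          Language.Term.var (Sum.inr (Fin.last (k + 1)))] ⊓
        ML.stAux φ (k + 1)).Realize v (Fin.snoc xs a)) ↔ _
    constructor
    · rintro ⟨a, ha⟩
      rw [BoundedFormula.realize_inf] at ha
      obtain ⟨h1, h2⟩ := ha
      have hr : M.R ((Fin.snoc (α := fun _ => M.W) xs a) (Fin.last k).castSucc)
          ((Fin.snoc (α := fun _ => M.W) xs a) (Fin.last (k+1))) := h1
      rw [Fin.snoc_castSucc, Fin.snoc_last] at hr
      have hs := (ihφ (k + 1) v (Fin.snoc xs a)).mp h2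
      rw [Fin.snoc_last] at hs
      exact ⟨a, hr, hs⟩
    · rintro ⟨a, hr, hs⟩
      refine ⟨a, ?_⟩
      rw [BoundedFormula.realize_inf]
      refine ⟨?_, ?_⟩
      · show M.R ((Fin.snoc (α := fun _ => M.W) xs a) (Fin.last k).castSucc)
          ((Fin.snoc (α := fun _ => M.W) xs a) (Fin.last (k+1)))
        rw [Fin.snoc_castSucc, Fin.snoc_last]
        exact hr
      · refine (ihφ (k + 1) v (Fin.snoc xs a)).mpr ?_
        rw [Fin.snoc_last]
        exact hs

theorem st_realize (M : Kripke) (χ : ML) (w : M.W) :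
    (ML.st χ).Realize (fun _ : Fin 1 => w) ↔ ML.sat M w χ := by
  rw [ML.st, Formula.realize_relabel, BoundedFormula.realize_toFormula]
  exact stAux_realize M χ 0 _ _
-- Section 9: arbitrary structures as Kripke models
/-- Realization only depends on the interpretation of the relation symbols. -/
theorem boundedFormula_realize_congr {A : Type} (S₁ S₂ : modalLang.Structure A)
    (hR : ∀ (m : ℕ) (r : modalLang.Relations m) (v : Fin m → A),
      Structure.RelMap (self := S₁) r v ↔ Structure.RelMap (self := S₂) r v) :
    ∀ {k : ℕ} (ψ : modalLang.BoundedFormula (Fin 1) k) (v : Fin 1 → A) (xs : Fin k → A),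
      @FirstOrder.Language.BoundedFormula.Realize modalLang A S₁ (Fin 1) k ψ v xs ↔
        @FirstOrder.Language.BoundedFormula.Realize modalLang A S₂ (Fin 1) k ψ v xs := by
  intro k ψ
  induction ψ with
  | falsum => intro v xs; exact Iff.rfl
  | equal t₁ t₂ =>
    intro v xs
    obtain ⟨s₁, rfl⟩ := term_eq_var t₁
    obtain ⟨s₂, rfl⟩ := term_eq_var t₂
    show Sum.elim v xs s₁ = Sum.elim v xs s₂ ↔ Sum.elim v xs s₁ = Sum.elim v xs s₂
    exact Iff.rfl
  | @rel k' l r ts =>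
    intro v xs
    match l, r with
    | 0, r' => exact (r' : Empty).elim
    | m + 3, r' => exact (r' : Empty).elim
    | 1, p =>
      obtain ⟨s, hs⟩ := term_eq_var (ts 0)
      have hts : ts = ![Language.Term.var s] := by
        funext i; fin_cases i; simpa using hs
      subst hts
      refine Iff.trans (hR 1 p _) (iff_of_eq (congrArg _ ?_))
      funext i
      fin_cases i
      rfl
    | 2, r' =>
      obtain ⟨s₀, hs₀⟩ := term_eq_var (ts 0)
      obtain ⟨s₁, hs₁⟩ := term_eq_var (ts 1)
      have hts : ts = ![Language.Term.var s₀, Language.Term.var s₁] := by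
        funext i
        fin_cases i
        · simpa using hs₀
        · simpa using hs₁
      subst hts
      refine Iff.trans (hR 2 r' _) (iff_of_eq (congrArg _ ?_))
      funext i
      fin_cases i <;> rfl
  | imp f g ihf ihg =>
    intro v xs
    show (_ → _) ↔ (_ → _)
    rw [ihf v xs, ihg v xs]
  | all f ihf =>
    intro v xs
    show (∀ x, _) ↔ (∀ x, _)
    exact forall_congr' fun x => ihf v (Fin.snoc xs x)

/-- A `modalLang`-structure as a Kripke model. -/
def toKripke (A : Type) [S : modalLang.Structure A] [ne : Nonempty A] : Kripke where
  W := A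
  nonempty := ne
  R x y := Structure.RelMap (L := modalLang) (show modalLang.Relations 2 from ()) ![x, y]
  V p := {x | Structure.RelMap (L := modalLang) (show modalLang.Relations 1 from p) ![x]}

theorem toKripke_relmap (A : Type) [S : modalLang.Structure A] [ne : Nonempty A]
    (m : ℕ) (r : modalLang.Relations m) (v : Fin m → A) :
    Structure.RelMap (self := (toKripke A).toStructure) r v ↔
      Structure.RelMap (self := S) r v := by
  match m, r with
  | 0, r' => exact (r' : Empty).elim
  | m' + 3, r' => exact (r' : Empty).elim
  | 1, p =>
    show v 0 ∈ (toKripke A).V p ↔ _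
    show Structure.RelMap (self := S) (show modalLang.Relations 1 from p) ![v 0] ↔ _
    refine iff_of_eq (congrArg _ ?_)
    funext i
    fin_cases i
    rfl
  | 2, r' =>
    show (toKripke A).R (v 0) (v 1) ↔ _
    show Structure.RelMap (self := S) (show modalLang.Relations 2 from r') ![v 0, v 1] ↔ _
    refine iff_of_eq (congrArg _ ?_)
    funext i
    fin_cases i <;> rfl

theorem realize_toKripke (A : Type) [S : modalLang.Structure A] [ne : Nonempty A]
    (ψ : modalLang.Formula (Fin 1)) (v : Fin 1 → A) :
    Formula.Realize (M := A) ψ v ↔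
      @FirstOrder.Language.Formula.Realize modalLang A (toKripke A).toStructure (Fin 1) ψ v :=
  (boundedFormula_realize_congr (toKripke A).toStructure S
    (toKripke_relmap A) ψ v default).symm
-- Section 10: assembly
theorem unarySyms_finite {α : Type} : ∀ {k : ℕ} (ψ : modalLang.BoundedFormula α k),
    (unarySyms ψ).Finite := by
  intro k ψ
  induction ψ with
  | falsum => exact Set.finite_empty
  | equal _ _ => exact Set.finite_empty
  | @rel k' l r ts =>
    match l, r with
    | 0, r' => exact (r' : Empty).elim
    | m + 3, r' => exact (r' : Empty).elim
    | 1, p => exact Set.finite_singleton p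
    | 2, r' => exact Set.finite_empty
  | imp f g ihf ihg => exact ihf.union ihg
  | all f ihf => exact ihf

/-- Otto's theorem: a bisimulation-invariant first-order formula of quantifier rank `q`
is equivalent to the standard translation of a modal formula of modal depth `≤ 2^q - 1`. -/
theorem otto (φ : modalLang.Formula (Fin 1)) (q : ℕ) (hq : qr φ = q)
    (σ : Set ℕ) (hσ : σ = unarySyms φ)
    (hinv : ∀ (M₁ M₂ : Kripke) (u₁ : M₁.W) (u₂ : M₂.W),
      Bisimilar σ M₁ M₂ u₁ u₂ → (φ.Realize (fun _ => u₁) ↔ φ.Realize (fun _ => u₂))) :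
    ∃ χ : ML, χ.depth ≤ 2 ^ q - 1 ∧
      ∀ (A : Type) [modalLang.Structure A] [Nonempty A] (a : A),
        φ.Realize (fun _ => a) ↔ (ML.st χ).Realize (fun _ => a) := by
  classical
  have hfin : σ.Finite := hσ ▸ unarySyms_finite φ
  set σF : Finset ℕ := hfin.toFinset with hσF
  have hσsub : σ ⊆ ↑σF := by rw [Set.Finite.coe_toFinset]
  set n : ℕ := 2 ^ q - 1 with hn'
  have hn : n + 1 = 2 ^ q := by
    have := Nat.one_le_two_pow (n := q)
    omega
  -- Step 1: φ only depends on the truncated unravelling.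
  have step1 : ∀ (K : Kripke) (a : K.W),
      φ.Realize (M := K.W) (fun _ => a) ↔
        φ.Realize (M := (Tr K a n).W) (fun _ => rootT K a n) := by
    intro K a
    have e1 := hinv K (BigA K a n) a (rootA K a n) (bisim_M_BigA σ K a n)
    have e3 := hinv (BigB K a n) (Tr K a n) (rootB K a n) (rootT K a n) (bisim_BigB_Tr σ K a n)
    have inv0 : INV K a n q (Fin.cons (rootA K a n) (default : Fin 0 → (BigA K a n).W))
        (Fin.cons (rootB K a n) (default : Fin 0 → (BigB K a n).W)) := by
      refine ⟨fun i => ?_, fun i => ?_, fun i h1 h2 => ?_, fun i i' hmm => ?_⟩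
      · have : i = 0 := Fin.fin_one_eq_zero i
        subst this
        rfl
      · have : i = 0 := Fin.fin_one_eq_zero i
        subst this
        exact Or.inl ⟨rfl, Or.inl rfl⟩
      · have : i = 0 := Fin.fin_one_eq_zero i
        subst this
        show (List.nil (α := K.W)).length + 2 ^ q ≤ n + 1
        simp [hn]
      · have h1 : i = 0 := Fin.fin_one_eq_zero i
        have h2 : i' = 0 := Fin.fin_one_eq_zero i'
        subst h1; subst h2
        exact absurd Iff.rfl hmm
    have hbf := core q _ _ inv0
    have e2 := EF φ q (le_of_eq hq) (default : Fin 0 → (BigA K a n).W)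
      (default : Fin 0 → (BigB K a n).W) (rootA K a n) (rootB K a n) hbf
    exact e1.trans (e2.trans e3)
  -- Step 2: φ only depends on the depth-n type.
  have step2 : ∀ (K : Kripke) (a : K.W) (L : Kripke) (b : L.W),
      typeOf σF K n a = typeOf σF L n b →
      (φ.Realize (M := K.W) (fun _ => a) ↔ φ.Realize (M := L.W) (fun _ => b)) := by
    intro K a L b ht
    have e4 := hinv (Tr K a n) (Tr L b n) (rootT K a n) (rootT L b n)
      (bisim_Tr_of_typeOf ht σ hσsub)
    exact (step1 K a).trans (e4.trans (step1 L b).symm)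
  -- The modal formula.
  have hfinH : Finite (HT σF n) := htFinite σF n
  set G : Finset (HT σF n) := Set.Finite.toFinset (Set.toFinite
    {t : HT σF n | ∃ (K : Kripke) (a : K.W),
      φ.Realize (M := K.W) (fun _ => a) ∧ typeOf σF K n a = t}) with hG
  set χ : ML := MLorL (G.toList.map (toML σF n)) with hχ
  refine ⟨χ, ?_, ?_⟩
  · refine depth_MLorL fun ψ hψ => ?_
    simp only [List.mem_map] at hψ
    obtain ⟨t, ht, rfl⟩ := hψ
    exact depth_toML σF n t
  · intro A SA NA a
    have h1 := realize_toKripke A φ (fun _ => a)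
    have h2 := realize_toKripke A (ML.st χ) (fun _ => a)
    refine h1.trans (Iff.trans ?_ h2.symm)
    refine Iff.trans ?_ (st_realize (toKripke A) χ a).symm
    constructor
    · intro hφ
      have htG : typeOf σF (toKripke A) n a ∈ G := by
        rw [hG, Set.Finite.mem_toFinset]
        exact ⟨toKripke A, a, hφ, rfl⟩
      refine sat_MLorL.mpr ⟨toML σF n (typeOf σF (toKripke A) n a),
        List.mem_map.mpr ⟨_, Finset.mem_toList.mpr htG, rfl⟩, sat_toML_self σF n (toKripke A) a⟩
    · intro hs
      obtain ⟨ψ, hψ, hsψ⟩ := sat_MLorL.mp hs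
      obtain ⟨t, htG, rfl⟩ := List.mem_map.mp hψ
      rw [Finset.mem_toList, hG, Set.Finite.mem_toFinset] at htG
      obtain ⟨K₀, a₀, hφ₀, hty₀⟩ := htG
      have hta : typeOf σF (toKripke A) n a = t := typeOf_eq_of_sat σF n (toKripke A) a t hsψ
      exact (step2 K₀ a₀ (toKripke A) a (hty₀.trans hta.symm)).mp hφ₀
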